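/- For the Fibonacci polynomial p(t) = t^2 - t - 1, the absolute value of ∏_{ω^{2n} = 1} p(ω) over all complex 2n-th roots of unity equals f_{2n-1} + f_{2n+1} - 2, where f is the Fibonacci sequence. -/

import Mathlib

open Polynomial

/-- Evaluation of the product of `(ω - α)` over all `n`-th roots of unity. -/
lemma prod_nthRoots_sub (n : ℕ) (hn : n ≠ 0) (α : ℂ) :
    ((Polynomial.nthRoots n (1 : ℂ)).map fun ω => α - ω).prod = α ^ n - 1 := by
  have hm : (X ^ n - C (1 : ℂ)).Monic := monic_X_pow_sub_C 1 hn
  have hsplit := Polynomial.Splits.eq_prod_roots_of_monic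
    (IsAlgClosed.splits _) hm
  have hroots : (X ^ n - C (1 : ℂ)).roots = Polynomial.nthRoots n 1 := rfl
  rw [hroots] at hsplit
  have := congrArg (Polynomial.eval α) hsplit
  simpa [Polynomial.eval_multiset_prod, Multiset.map_map, Function.comp] using this.symm

/-- Powers of a root of `x² = x + 1` in terms of Fibonacci numbers. -/
lemma pow_fib (φ : ℂ) (hφ : φ ^ 2 = φ + 1) (m : ℕ) :
    φ ^ (m + 1) = (Nat.fib (m + 1) : ℂ) * φ + Nat.fib m := by
  induction m with
  | zero => simp
  | succ k ih =>
      have h1 : φ ^ (k + 2) = φ ^ (k + 1) * φ := by ring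
      rw [h1, ih, Nat.fib_add_two]
      push_cast
      linear_combination (Nat.fib (k + 1) : ℂ) * hφ

/-- For `p(t) = t² - t - 1`, the absolute value of the product of `p` over all complex
`2n`-th roots of unity equals `f_{2n-1} + f_{2n+1} - 2`. -/
theorem figureEight_homology_order (n : ℕ) (hn : 1 ≤ n) :
    ‖((Polynomial.nthRoots (2 * n) (1 : ℂ)).map fun ω => ω ^ 2 - ω - 1).prod‖ =
      Nat.fib (2 * n - 1) + Nat.fib (2 * n + 1) - 2 := by
  have h2n : (2 * n) ≠ 0 := by omega
  set s : ℂ := (Real.sqrt 5 : ℂ) with hs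
  have hs2 : s ^ 2 = 5 := by
    rw [hs]
    norm_cast
    rw [Real.sq_sqrt] <;> norm_num
  set φ : ℂ := (1 + s) / 2 with hφdef
  set ψ : ℂ := (1 - s) / 2 with hψdef
  have hφ : φ ^ 2 = φ + 1 := by rw [hφdef]; field_simp; linear_combination hs2
  have hψ : ψ ^ 2 = ψ + 1 := by rw [hψdef]; field_simp; linear_combination hs2
  have hsum : φ + ψ = 1 := by rw [hφdef, hψdef]; ring
  have hmul : φ * ψ = -1 := by
    rw [hφdef, hψdef]; field_simp; linear_combination -hs2
  -- split the product
  have hsplit : ((Polynomial.nthRoots (2 * n) (1 : ℂ)).map fun ω => ω ^ 2 - ω - 1).prod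
      = (φ ^ (2 * n) - 1) * (ψ ^ (2 * n) - 1) := by
    have heq : ((Polynomial.nthRoots (2 * n) (1 : ℂ)).map fun ω => ω ^ 2 - ω - 1)
        = ((Polynomial.nthRoots (2 * n) (1 : ℂ)).map fun ω => (φ - ω) * (ψ - ω)) := by
      apply Multiset.map_congr rfl
      intro ω _
      linear_combination (1 - ω) * hsum - hmul
    rw [heq]
    have : ((Polynomial.nthRoots (2 * n) (1 : ℂ)).map fun ω => (φ - ω) * (ψ - ω)).prod
        = ((Polynomial.nthRoots (2 * n) (1 : ℂ)).map fun ω => (φ - ω)).prod *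
          ((Polynomial.nthRoots (2 * n) (1 : ℂ)).map fun ω => (ψ - ω)).prod := by
      rw [← Multiset.prod_map_mul]
    rw [this, prod_nthRoots_sub _ h2n, prod_nthRoots_sub _ h2n]
  -- Fibonacci values
  obtain ⟨m, hm⟩ : ∃ m, 2 * n = m + 1 := ⟨2 * n - 1, by omega⟩
  have hφp := pow_fib φ hφ m
  have hψp := pow_fib ψ hψ m
  have hpow : (φ * ψ) ^ (2 * n) = 1 := by
    rw [hmul]
    exact (even_two_mul n).neg_one_pow
  have key : (φ ^ (2 * n) - 1) * (ψ ^ (2 * n) - 1)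
      = 2 - ((Nat.fib (m + 1) : ℂ) + 2 * Nat.fib m) := by
    have hexp : (φ ^ (2 * n) - 1) * (ψ ^ (2 * n) - 1)
        = (φ * ψ) ^ (2 * n) - (φ ^ (2 * n) + ψ ^ (2 * n)) + 1 := by
      rw [mul_pow]; ring
    rw [hexp, hpow, hm, hφp, hψp]
    linear_combination (Nat.fib (m + 1) : ℂ) * hsum
  rw [hsplit, key]
  -- compute the absolute value
  have hreal : (2 - ((Nat.fib (m + 1) : ℂ) + 2 * Nat.fib m))
      = ((2 - ((Nat.fib (m + 1) : ℝ) + 2 * Nat.fib m) : ℝ) : ℂ) := by push_cast; ring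
  rw [hreal, Complex.norm_real, Real.norm_eq_abs]
  have hge : (2 : ℝ) ≤ (Nat.fib (m + 1) : ℝ) + 2 * Nat.fib m := by
    have hm1 : 1 ≤ m := by omega
    have h1 : 1 ≤ Nat.fib m := Nat.fib_pos.mpr (by omega)
    have h2 : 1 ≤ Nat.fib (m + 1) := Nat.fib_pos.mpr (by omega)
    push_cast
    have : (1 : ℝ) ≤ Nat.fib m := by exact_mod_cast h1
    have : (1 : ℝ) ≤ Nat.fib (m + 1) := by exact_mod_cast h2
    nlinarith [this]
  rw [abs_of_nonpos (by linarith)]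
  have h1 : 2 * n - 1 = m := by omega
  have h2 : 2 * n + 1 = m + 2 := by omega
  rw [h1, h2, Nat.fib_add_two]
  push_cast
  ring
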